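/- Suppose G is a group such that every class in H₂(G; ℤ) equals g ∧ h for some commuting g, h ∈ G, and G contains no subgroup isomorphic to ℤ × ℤ. Then H₂(G; ℚ) = 0. -/

import Mathlib

open Finsupp

/-- Degree-2 differential of the (inhomogeneous) bar complex of `G` with
coefficients in `k`: `[a|b] ↦ [b] - [ab] + [a]`. -/
noncomputable def barD2 (k : Type) [Ring k] (G : Type) [Group G] :
    ((G × G) →₀ k) →ₗ[k] (G →₀ k) :=
  Finsupp.lift _ k _ fun p => single p.2 1 - single (p.1 * p.2) 1 + single p.1 1

/-- Degree-3 differential of the bar complex: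
`[a|b|c] ↦ [b|c] - [ab|c] + [a|bc] - [a|b]`. -/
noncomputable def barD3 (k : Type) [Ring k] (G : Type) [Group G] :
    ((G × G × G) →₀ k) →ₗ[k] ((G × G) →₀ k) :=
  Finsupp.lift _ k _ fun t =>
    single (t.2.1, t.2.2) 1 - single (t.1 * t.2.1, t.2.2) 1
      + single (t.1, t.2.1 * t.2.2) 1 - single (t.1, t.2.1) 1

/-- The second group homology `H₂(G; k)`: 2-cycles modulo 2-boundaries of the
bar complex of `G` with coefficients in `k`. -/
noncomputable abbrev groupH2 (k : Type) [Ring k] (G : Type) [Group G] : Type :=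
  (barD2 k G).toAddMonoidHom.ker ⧸
    (((barD3 k G).toAddMonoidHom.range).comap (barD2 k G).toAddMonoidHom.ker.subtype)

theorem wedge_cycle {k : Type} [Ring k] {G : Type} [Group G] (g h : G)
    (hc : g * h = h * g) :
    single (g, h) (1 : k) - single (h, g) 1 ∈ (barD2 k G).toAddMonoidHom.ker := by
  rw [AddMonoidHom.mem_ker, LinearMap.toAddMonoidHom_coe, map_sub]
  simp only [barD2, Finsupp.lift_apply, sum_single_index, one_smul, zero_smul, hc]
  abel

/-- The Pontryagin product `g ∧ h ∈ H₂(G; k)` of commuting elements `g, h` of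
`G`, i.e. the homology class of the bar 2-cycle `[g|h] - [h|g]`. -/
noncomputable def wedgeClass (k : Type) [Ring k] {G : Type} [Group G]
    (g h : G) (hc : g * h = h * g) : groupH2 k G :=
  QuotientAddGroup.mk ⟨single (g, h) 1 - single (h, g) 1, wedge_cycle g h hc⟩

section maps

variable (k : Type) [Ring k] {G H : Type} [Group G] [Group H] (f : G →* H)

noncomputable def barC1Map : (G →₀ k) →ₗ[k] (H →₀ k) := Finsupp.lmapDomain k k f

noncomputable def barC2Map : ((G × G) →₀ k) →ₗ[k] ((H × H) →₀ k) :=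
  Finsupp.lmapDomain k k (Prod.map f f)

noncomputable def barC3Map : ((G × G × G) →₀ k) →ₗ[k] ((H × H × H) →₀ k) :=
  Finsupp.lmapDomain k k (Prod.map f (Prod.map f f))

theorem mapDomain_sub' {k : Type} [Ring k] {α β : Type} (f : α → β)
    (x y : α →₀ k) : mapDomain f (x - y) = mapDomain f x - mapDomain f y :=
  (Finsupp.mapDomain.addMonoidHom f).map_sub x y

theorem barD2_comm :
    (barD2 k H).comp (barC2Map k f) = (barC1Map k f).comp (barD2 k G) := by
  apply Finsupp.lhom_ext
  intro a b
  simp only [LinearMap.comp_apply, barC2Map, barC1Map, lmapDomain_apply,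
    mapDomain_single, barD2, Finsupp.lift_apply, sum_single_index, one_smul,
    zero_smul, smul_sub, smul_add]
  simp [mapDomain_add, mapDomain_sub', mapDomain_single, Prod.map, map_mul]

theorem barD3_comm :
    (barD3 k H).comp (barC3Map k f) = (barC2Map k f).comp (barD3 k G) := by
  apply Finsupp.lhom_ext
  intro a b
  simp only [LinearMap.comp_apply, barC3Map, barC2Map, lmapDomain_apply,
    mapDomain_single, barD3, Finsupp.lift_apply, sum_single_index, one_smul,
    zero_smul, smul_sub, smul_add]
  simp [mapDomain_add, mapDomain_sub', mapDomain_single, Prod.map, map_mul]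

theorem barC2Map_ker (x : (G × G) →₀ k) (hx : x ∈ (barD2 k G).toAddMonoidHom.ker) :
    barC2Map k f x ∈ (barD2 k H).toAddMonoidHom.ker := by
  rw [AddMonoidHom.mem_ker, LinearMap.toAddMonoidHom_coe] at hx ⊢
  have := congrFun (congrArg DFunLike.coe (barD2_comm k f)) x
  simp only [LinearMap.comp_apply] at this
  rw [this, hx, map_zero]

/-- The homomorphism `H₂(G; k) → H₂(H; k)` induced by a group homomorphism
`f : G → H`. -/
noncomputable def groupH2Map : groupH2 k G →+ groupH2 k H := by
  refine QuotientAddGroup.map _ _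
    ((((barC2Map k f).toAddMonoidHom.domRestrict
        (barD2 k G).toAddMonoidHom.ker).codRestrict
      (barD2 k H).toAddMonoidHom.ker
      (fun x => barC2Map_ker k f x.1 x.2)) : _ →+ _) ?_
  rintro ⟨x, hx⟩ hmem
  simp only [AddSubgroup.mem_comap, AddSubgroup.coe_subtype,
    AddMonoidHom.mem_range] at hmem ⊢
  obtain ⟨y, hy⟩ := hmem
  refine ⟨barC3Map k f y, ?_⟩
  have h3 := congrFun (congrArg DFunLike.coe (barD3_comm k f)) y
  simp only [LinearMap.comp_apply] at h3
  simp only [LinearMap.toAddMonoidHom_coe, AddSubgroup.coe_subtype] at hy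
  simp only [AddMonoidHom.codRestrict_apply, AddMonoidHom.domRestrict_apply,
    LinearMap.toAddMonoidHom_coe, AddSubgroup.coe_subtype]
  rw [h3, hy]
  rfl

end maps

theorem barD3_single {G : Type} [Group G] (a b c : G) :
    barD3 ℚ G (single (a, b, c) 1) =
      single (b, c) 1 - single (a * b, c) 1 + single (a, b * c) 1 - single (a, b) 1 := by
  simp [barD3, Finsupp.lift_apply, sum_single_index]

theorem wedge_bilin {G : Type} [Group G] (a b c : G) (hac : a * c = c * a)
    (hbc : b * c = c * b) :
    (single (a * b, c) (1:ℚ) - single (c, a * b) 1) - (single (a, c) 1 - single (c, a) 1)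
      - (single (b, c) 1 - single (c, b) 1) ∈ LinearMap.range (barD3 ℚ G) := by
  refine ⟨-(single (a, (b, c)) 1 - single (a, (c, b)) 1 + single (c, (a, b)) 1), ?_⟩
  simp only [map_neg, map_sub, map_add, barD3_single]
  rw [← hbc, ← hac]
  abel

theorem wedge_one {G : Type} [Group G] (h : G) :
    single ((1:G), h) (1:ℚ) - single (h, 1) 1 ∈ LinearMap.range (barD3 ℚ G) := by
  have h1 := wedge_bilin (1:G) 1 h (by group) (by group)
  simp only [one_mul] at h1
  have h2 := neg_mem h1
  rwa [show -(single ((1:G), h) (1:ℚ) - single (h, 1) 1 - (single (1, h) 1 - single (h, 1) 1)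
      - (single (1, h) 1 - single (h, 1) 1)) = single ((1:G), h) (1:ℚ) - single (h, 1) 1
    from by abel] at h2

theorem wedge_zpow {G : Type} [Group G] (g h : G) (hc : g * h = h * g) (m : ℤ) :
    (single (g ^ m, h) (1:ℚ) - single (h, g ^ m) 1)
      - (m : ℚ) • (single (g, h) 1 - single (h, g) 1) ∈ LinearMap.range (barD3 ℚ G) := by
  have hcm : ∀ k : ℤ, g ^ k * h = h * g ^ k := fun k => ((Commute.zpow_left hc k)).eq
  induction m using Int.induction_on with
  | zero => simpa using wedge_one h
  | succ n ih =>
      have hb := wedge_bilin (g ^ (n:ℤ)) g h (hcm n) hc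
      have key := add_mem hb ih
      have heq : (single (g ^ ((n:ℤ)+1), h) (1:ℚ) - single (h, g ^ ((n:ℤ)+1)) 1)
          - (((n:ℤ)+1 : ℤ) : ℚ) • (single (g, h) 1 - single (h, g) 1) =
          ((single (g ^ (n:ℤ) * g, h) (1:ℚ) - single (h, g ^ (n:ℤ) * g) 1)
            - (single (g ^ (n:ℤ), h) 1 - single (h, g ^ (n:ℤ)) 1)
            - (single (g, h) 1 - single (h, g) 1))
          + ((single (g ^ (n:ℤ), h) (1:ℚ) - single (h, g ^ (n:ℤ)) 1)
            - ((n:ℤ) : ℚ) • (single (g, h) 1 - single (h, g) 1)) := by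
        rw [← zpow_add_one]; push_cast; module
      rw [heq]; exact key
  | pred n ih =>
      have hb := wedge_bilin (g ^ (-(n:ℤ)-1)) g h (hcm _) hc
      have key := sub_mem ih hb
      have heq : (single (g ^ (-(n:ℤ)-1), h) (1:ℚ) - single (h, g ^ (-(n:ℤ)-1)) 1)
          - ((-(n:ℤ)-1 : ℤ) : ℚ) • (single (g, h) 1 - single (h, g) 1) =
          ((single (g ^ (-(n:ℤ)), h) (1:ℚ) - single (h, g ^ (-(n:ℤ))) 1)
            - ((-(n:ℤ) : ℤ) : ℚ) • (single (g, h) 1 - single (h, g) 1))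
          - ((single (g ^ (-(n:ℤ)-1) * g, h) (1:ℚ) - single (h, g ^ (-(n:ℤ)-1) * g) 1)
            - (single (g ^ (-(n:ℤ)-1), h) 1 - single (h, g ^ (-(n:ℤ)-1)) 1)
            - (single (g, h) 1 - single (h, g) 1)) := by
        rw [show g ^ (-(n:ℤ)-1) * g = g ^ (-(n:ℤ)) from by
          rw [← zpow_add_one]; ring_nf]
        push_cast; module
      rw [heq]; exact key

theorem torsion_aux {G : Type} [Group G] (g h : G) (hc : g * h = h * g) (m n : ℤ)
    (hmn : g ^ m * h ^ n = 1) :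
    (m : ℚ) • (single (g, h) (1:ℚ) - single (h, g) 1) ∈ LinearMap.range (barD3 ℚ G) := by
  have h1 := wedge_bilin (g ^ m) (h ^ n) h ((Commute.zpow_left hc m)).eq
    ((Commute.refl h).zpow_left n).eq
  rw [hmn] at h1
  have h2 := wedge_one h
  have h3 := wedge_zpow g h hc m
  have h4 : single (h ^ n, h) (1:ℚ) - single (h, h ^ n) 1 ∈ LinearMap.range (barD3 ℚ G) := by
    simpa using wedge_zpow h h rfl n
  have key := sub_mem (sub_mem (sub_mem h2 h1) h4) h3
  rwa [show single ((1:G), h) (1:ℚ) - single (h, 1) 1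
      - ((single ((1:G), h) (1:ℚ) - single (h, 1) 1)
        - (single (g ^ m, h) 1 - single (h, g ^ m) 1)
        - (single (h ^ n, h) 1 - single (h, h ^ n) 1))
      - (single (h ^ n, h) (1:ℚ) - single (h, h ^ n) 1)
      - ((single (g ^ m, h) (1:ℚ) - single (h, g ^ m) 1)
        - (m : ℚ) • (single (g, h) 1 - single (h, g) 1)) =
      (m : ℚ) • (single (g, h) (1:ℚ) - single (h, g) 1) from by module] at key

theorem wedge_rat_boundary {G : Type} [Group G]
    (hG : ∀ K : Subgroup G, ¬ Nonempty (K ≃* Multiplicative (ℤ × ℤ))) (g h : G)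
    (hc : g * h = h * g) :
    single (g, h) (1:ℚ) - single (h, g) 1 ∈ LinearMap.range (barD3 ℚ G) := by
  have hcm : ∀ k l : ℤ, Commute (g ^ k) (h ^ l) :=
    fun k l => (Commute.zpow_left hc k).zpow_right l
  let φ : Multiplicative (ℤ × ℤ) →* G :=
    { toFun := fun p => g ^ (p.toAdd.1) * h ^ (p.toAdd.2)
      map_one' := by simp
      map_mul' := by
        intro p q
        simp only [toAdd_mul, Prod.fst_add, Prod.snd_add, zpow_add]
        rw [mul_assoc, ← mul_assoc (g ^ q.toAdd.1), (hcm q.toAdd.1 p.toAdd.2).eq]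
        simp [mul_assoc] }
  have hninj : ¬ Function.Injective φ := by
    intro hinj
    exact hG φ.range ⟨(MonoidHom.ofInjective hinj).symm⟩
  rw [Function.not_injective_iff] at hninj
  obtain ⟨a, b, hab, hne⟩ := hninj
  set p := a * b⁻¹ with hp
  have hφp : φ p = 1 := by rw [hp, map_mul, map_inv, hab, mul_inv_cancel]
  have hpne : p.toAdd ≠ 0 := by
    intro h0
    apply hne
    have : p = 1 := by
      rwa [← toAdd_eq_zero]
    rw [hp] at this
    exact mul_inv_eq_one.mp this
  have hrel : g ^ p.toAdd.1 * h ^ p.toAdd.2 = 1 := hφp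
  set m := p.toAdd.1
  set n := p.toAdd.2
  have hmn : m ≠ 0 ∨ n ≠ 0 := by
    by_contra hcon
    push_neg at hcon
    exact hpne (Prod.ext hcon.1 hcon.2)
  have hmem : ∃ N : ℤ, N ≠ 0 ∧
      (N : ℚ) • (single (g, h) (1:ℚ) - single (h, g) 1) ∈ LinearMap.range (barD3 ℚ G) := by
    rcases hmn with hm | hn
    · exact ⟨m, hm, torsion_aux g h hc m n hrel⟩
    · refine ⟨n, hn, ?_⟩
      have hrel' : h ^ n * g ^ m = 1 := by
        rw [← (hcm m n).eq]; exact hrel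
      have := torsion_aux h g hc.symm n m hrel'
      have h2 := neg_mem this
      rwa [show -((n : ℚ) • (single (h, g) (1:ℚ) - single (g, h) 1)) =
        (n : ℚ) • (single (g, h) (1:ℚ) - single (h, g) 1) from by module] at h2
  obtain ⟨N, hN0, hNmem⟩ := hmem
  have := Submodule.smul_mem _ ((N : ℚ)⁻¹) hNmem
  rwa [smul_smul, inv_mul_cancel₀ (by exact_mod_cast hN0), one_smul] at this

noncomputable def castMap (α : Type) : (α →₀ ℤ) →+ (α →₀ ℚ) :=
  Finsupp.mapRange.addMonoidHom (Int.castAddHom ℚ)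

theorem castMap_single {α : Type} (a : α) (n : ℤ) :
    castMap α (single a n) = single a (n : ℚ) := by
  simp [castMap, Finsupp.mapRange_single]

theorem castMap_apply {α : Type} (z : α →₀ ℤ) (a : α) :
    castMap α z a = (z a : ℚ) := by
  simp [castMap, Finsupp.mapRange_apply]

theorem castMap_injective (α : Type) : Function.Injective (castMap α) :=
  Finsupp.mapRange_injective _ (by simp) Int.cast_injective

theorem cast_barD2 {G : Type} [Group G] (z : (G × G) →₀ ℤ) :
    castMap G (barD2 ℤ G z) = barD2 ℚ G (castMap (G × G) z) := by
  induction z using Finsupp.induction_linear with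
  | zero => simp
  | add f g hf hg => simp only [map_add, hf, hg]
  | single p n =>
      simp only [barD2, Finsupp.lift_apply, castMap_single, sum_single_index, zero_smul,
        smul_add, smul_sub, Finsupp.smul_single, smul_eq_mul, mul_one, map_add, map_sub,
        Rat.smul_one_eq_cast]
      simp [castMap_single]

theorem cast_barD3 {G : Type} [Group G] (z : (G × G × G) →₀ ℤ) :
    castMap (G × G) (barD3 ℤ G z) = barD3 ℚ G (castMap (G × G × G) z) := by
  induction z using Finsupp.induction_linear with
  | zero => simp
  | add f g hf hg => simp only [map_add, hf, hg]
  | single p n =>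
      simp only [barD3, Finsupp.lift_apply, castMap_single, sum_single_index, zero_smul,
        smul_add, smul_sub, Finsupp.smul_single, smul_eq_mul, mul_one, map_add, map_sub,
        Rat.smul_one_eq_cast]
      simp [castMap_single]

theorem clear_denoms {α : Type} (x : α →₀ ℚ) :
    ∃ (N : ℤ) (z : α →₀ ℤ), N ≠ 0 ∧ castMap α z = (N : ℚ) • x := by
  classical
  set N : ℤ := ∏ p ∈ x.support, ((x p).den : ℤ) with hN
  refine ⟨N, Finsupp.mapRange (fun q => N / (q.den : ℤ) * q.num) (by simp) x, ?_, ?_⟩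
  · refine ne_of_gt (Finset.prod_pos fun p _ => ?_)
    exact_mod_cast (x p).pos
  · ext a
    rw [castMap_apply, Finsupp.mapRange_apply, Finsupp.smul_apply, smul_eq_mul]
    by_cases ha : a ∈ x.support
    · have hd : ((x a).den : ℤ) ∣ N := Finset.dvd_prod_of_mem _ ha
      obtain ⟨c, hc⟩ := hd
      rw [hc, Int.mul_ediv_cancel_left _ (by exact_mod_cast (x a).den_nz)]
      have hden : ((x a).den : ℚ) ≠ 0 := by exact_mod_cast (x a).den_nz
      have hx : (x a) * ((x a).den : ℚ) = ((x a).num : ℚ) := by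
        nth_rewrite 1 [← Rat.num_div_den (x a)]
        exact div_mul_cancel₀ _ hden
      push_cast
      rw [← hx]
      ring
    · simp [Finsupp.notMem_support_iff.mp ha]

/-- If every class of `H₂(G; ℤ)` is a Pontryagin product `g ∧ h` of commuting
elements, and `G` has no subgroup isomorphic to `ℤ × ℤ`, then `H₂(G; ℚ) = 0`. -/
theorem stmt12 (G : Type) [Group G]
    (hwedge : ∀ u : groupH2 ℤ G,
      ∃ (g h : G) (hc : g * h = h * g), u = wedgeClass ℤ g h hc)
    (hG : ∀ K : Subgroup G, ¬ Nonempty (K ≃* Multiplicative (ℤ × ℤ))) :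
    Subsingleton (groupH2 ℚ G) := by
  refine subsingleton_of_forall_eq 0 fun u => ?_
  refine QuotientAddGroup.induction_on u fun x => ?_
  rw [QuotientAddGroup.eq_zero_iff, AddSubgroup.mem_comap]
  have hx : barD2 ℚ G x.1 = 0 := by
    have := x.2
    rwa [AddMonoidHom.mem_ker, LinearMap.toAddMonoidHom_coe] at this
  -- clear denominators
  obtain ⟨N, z, hN, hz⟩ := clear_denoms x.1
  have hzcyc : barD2 ℤ G z = 0 := by
    apply castMap_injective
    rw [cast_barD2, hz, map_smul, hx, smul_zero, map_zero]
  have hzker : z ∈ (barD2 ℤ G).toAddMonoidHom.ker := by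
    rwa [AddMonoidHom.mem_ker, LinearMap.toAddMonoidHom_coe]
  obtain ⟨g, h, hc, hu⟩ := hwedge (QuotientAddGroup.mk ⟨z, hzker⟩)
  rw [wedgeClass, QuotientAddGroup.eq, AddSubgroup.mem_comap] at hu
  obtain ⟨y, hy⟩ := hu
  simp only [LinearMap.toAddMonoidHom_coe, AddSubgroup.coe_subtype, AddSubgroup.coe_add,
    AddSubgroup.coe_neg] at hy
  -- hy : barD3 ℤ G y = -z + (single (g,h) 1 - single (h,g) 1)
  have hyq : barD3 ℚ G (castMap _ y) =
      -((N : ℚ) • x.1) + (single (g, h) (1:ℚ) - single (h, g) 1) := by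
    rw [← cast_barD3, hy]
    rw [map_add, map_neg, map_sub, castMap_single, castMap_single, hz]
    norm_num
  have hw := wedge_rat_boundary hG g h hc
  have hb : barD3 ℚ G (castMap _ y) ∈ LinearMap.range (barD3 ℚ G) := ⟨_, rfl⟩
  have hmem : (N : ℚ) • x.1 ∈ LinearMap.range (barD3 ℚ G) := by
    have := sub_mem hw hb
    rwa [hyq, show (single (g, h) (1:ℚ) - single (h, g) 1)
      - (-((N : ℚ) • x.1) + (single (g, h) (1:ℚ) - single (h, g) 1)) = (N : ℚ) • x.1
      from by abel] at this
  have hx1 : x.1 ∈ LinearMap.range (barD3 ℚ G) := by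
    have := Submodule.smul_mem _ ((N : ℚ)⁻¹) hmem
    rwa [smul_smul, inv_mul_cancel₀ (by exact_mod_cast hN), one_smul] at this
  obtain ⟨y', hy'⟩ := hx1
  exact ⟨y', by simpa using hy'⟩
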